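/- For the minority rule with odd m, R'(1/2) = −m! / (2^{m−1} ((m−1)/2)!²); this quantity is strictly decreasing in odd m, and is strictly less than −2 if and only if m ≥ 7. -/

import Mathlib

lemma sum_id (k : ℕ) : ∀ n, n ≤ 2*k →
    ∑ j ∈ Finset.range (n+1), ((2*k+1).choose j : ℝ) * (2*j - (2*k+1)) =
      -(2*k+1) * ((2*k).choose n) := by
  intro n
  induction n with
  | zero => intro _; simp
  | succ n ih =>
    intro hn
    rw [Finset.sum_range_succ, ih (by omega)]
    have h1 : (2*k+1) * (2*k).choose n = (2*k+1).choose (n+1) * (n+1) :=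
      Nat.add_one_mul_choose_eq (2*k) n
    have h2 : (2*k+1).choose (n+1) = (2*k).choose n + (2*k).choose (n+1) :=
      Nat.choose_succ_succ' (2*k) n
    have h1' : ((2*k+1 : ℕ):ℝ) * ((2*k).choose n) = ((2*k+1).choose (n+1)) * (n+1) := by
      exact_mod_cast congrArg (Nat.cast : ℕ → ℝ) h1
    have h2' : (((2*k+1).choose (n+1) : ℕ) : ℝ) = ((2*k).choose n) + ((2*k).choose (n+1)) := by
      exact_mod_cast congrArg (Nat.cast : ℕ → ℝ) h2
    push_cast at h1' h2' ⊢
    linear_combination (-2 : ℝ) * h1' - (2*(k:ℝ)+1) * h2'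

lemma deriv_eval (k : ℕ) :
    deriv (fun z : ℝ => ∑ j ∈ Finset.range (k+1),
        ((2*k+1).choose j : ℝ) * z ^ j * (1 - z) ^ (2*k+1 - j)) (1/2)
      = -(2*k+1) * ((2*k).choose k) * (1/2:ℝ)^(2*k) := by
  have hd : HasDerivAt (fun z : ℝ => ∑ j ∈ Finset.range (k+1),
        ((2*k+1).choose j : ℝ) * z ^ j * (1 - z) ^ (2*k+1 - j))
      (∑ j ∈ Finset.range (k+1),
        ((((2*k+1).choose j : ℝ)) * ((j:ℝ) * (1/2:ℝ)^(j-1)) * ((1:ℝ)-1/2)^(2*k+1-j)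
          + (((2*k+1).choose j : ℝ) * (1/2:ℝ)^j) *
            (((2*k+1-j : ℕ):ℝ) * ((1:ℝ)-1/2)^(2*k+1-j-1) * (-1)))) (1/2) := by
    apply HasDerivAt.fun_sum
    intro j _
    have h1 : HasDerivAt (fun z : ℝ => ((2*k+1).choose j : ℝ) * z ^ j)
        (((2*k+1).choose j : ℝ) * ((j:ℝ) * (1/2:ℝ)^(j-1))) (1/2) :=
      (hasDerivAt_pow j (1/2 : ℝ)).const_mul _
    have h2 : HasDerivAt (fun z : ℝ => (1 - z) ^ (2*k+1-j))
        (((2*k+1-j : ℕ):ℝ) * ((1:ℝ)-1/2)^(2*k+1-j-1) * (-1)) (1/2) :=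
      ((hasDerivAt_id (1/2:ℝ)).const_sub 1).pow _
    exact h1.mul h2
  rw [hd.deriv]
  have key : ∀ j ∈ Finset.range (k+1),
      ((((2*k+1).choose j : ℝ)) * ((j:ℝ) * (1/2:ℝ)^(j-1)) * ((1:ℝ)-1/2)^(2*k+1-j)
          + (((2*k+1).choose j : ℝ) * (1/2:ℝ)^j) *
            (((2*k+1-j : ℕ):ℝ) * ((1:ℝ)-1/2)^(2*k+1-j-1) * (-1)))
        = (1/2:ℝ)^(2*k) * (((2*k+1).choose j : ℝ) * (2*(j:ℝ) - (2*(k:ℝ)+1))) := by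
    intro j hj
    have hjk : j ≤ k := Nat.lt_succ_iff.mp (Finset.mem_range.mp hj)
    have hc : ((2*k+1-j : ℕ):ℝ) = 2*(k:ℝ)+1-(j:ℝ) := by
      have : (j:ℝ) ≤ 2*(k:ℝ)+1 := by exact_mod_cast (by omega : j ≤ 2*k+1)
      push_cast [Nat.cast_sub (by omega : j ≤ 2*k+1)]; ring
    rw [hc]
    norm_num
    match j, hjk with
    | 0, _ =>
      have e : 2*k+1-0-1 = 2*k := by omega
      rw [e]; push_cast; ring
    | (i+1), h =>
      have e1 : 2*k+1-(i+1) = 2*k - i := by omega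
      rw [e1]
      have e2 : 2*k-i-1 = 2*k - (i+1) := by omega
      rw [e2]
      simp only [Nat.add_sub_cancel]
      have p1 : ((1:ℝ)/2)^i * ((1:ℝ)/2)^(2*k-i) = ((1:ℝ)/2)^(2*k) := by
        rw [← pow_add]; congr 1; omega
      have p2 : ((1:ℝ)/2)^(i+1) * ((1:ℝ)/2)^(2*k-(i+1)) = ((1:ℝ)/2)^(2*k) := by
        rw [← pow_add]; congr 1; omega
      push_cast
      linear_combination (((2*k+1).choose (i+1) : ℝ)) * ((i:ℝ)+1) * p1
        - (((2*k+1).choose (i+1) : ℝ)) * (2*(k:ℝ)+1-((i:ℝ)+1)) * p2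
  rw [Finset.sum_congr rfl key, ← Finset.mul_sum, sum_id k k (by omega)]
  ring

noncomputable def rr (a : ℕ) : ℝ :=
  -((2*a+1).factorial : ℝ) / (2^(2*a) * ((a.factorial : ℝ))^2)

lemma r_formula (k : ℕ) :
    -(2*(k:ℝ)+1) * ((2*k).choose k : ℝ) * (1/2:ℝ)^(2*k) = rr k := by
  have hcf : (2*k).choose k * k.factorial * k.factorial = (2*k).factorial := by
    have h := Nat.choose_mul_factorial_mul_factorial (by omega : k ≤ 2*k)
    have e : 2*k - k = k := by omega
    rwa [e] at h
  have hcf' : (((2*k).choose k : ℝ)) * (k.factorial : ℝ) * (k.factorial : ℝ)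
      = ((2*k).factorial : ℝ) := by exact_mod_cast congrArg (Nat.cast : ℕ → ℝ) hcf
  have hfe : ((2*k+1).factorial : ℝ) = (2*(k:ℝ)+1) * ((2*k).factorial : ℝ) := by
    rw [Nat.factorial_succ]; push_cast; ring
  have hk0 : (k.factorial : ℝ) ≠ 0 := by positivity
  have h2 : ((2:ℝ)^(2*k)) ≠ 0 := by positivity
  rw [rr, hfe, eq_div_iff (by positivity)]
  have hp : (1/2:ℝ)^(2*k) * (2:ℝ)^(2*k) = 1 := by
    rw [div_pow, one_pow, div_mul_cancel₀]; exact h2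
  linear_combination (-(2*(k:ℝ)+1) * ((2*k).choose k : ℝ) * ((k.factorial:ℝ))^2) * hp
    - (2*(k:ℝ)+1) * hcf'

lemma rr_step (a : ℕ) : rr (a+1) < rr a := by
  have hF : (0:ℝ) < ((2*a+1).factorial : ℝ) := by positivity
  have hD : (0:ℝ) < (2:ℝ)^(2*a) * ((a.factorial : ℝ))^2 := by positivity
  have hfs : ((2*(a+1)+1).factorial : ℝ)
      = (2*(a:ℝ)+3) * ((2*(a:ℝ)+2)) * ((2*a+1).factorial : ℝ) := by
    have e : 2*(a+1)+1 = (2*a+1) + 1 + 1 := by omega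
    rw [e, Nat.factorial_succ, Nat.factorial_succ]; push_cast; ring
  have has : (((a+1).factorial : ℝ)) = ((a:ℝ)+1) * (a.factorial : ℝ) := by
    rw [Nat.factorial_succ]; push_cast; ring
  have e2 : (2:ℝ)^(2*(a+1)) = 4 * (2:ℝ)^(2*a) := by
    have e : 2*(a+1) = 2*a + 2 := by omega
    rw [e, pow_add]; ring
  rw [rr, rr, hfs, has, e2, div_lt_div_iff₀ (by positivity) (by positivity)]
  nlinarith [mul_pos hF hD]

lemma rr_anti : StrictAnti rr := strictAnti_nat_of_succ_lt rr_step

lemma rr_lt_neg_two (a : ℕ) : rr a < -2 ↔ 3 ≤ a := by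
  constructor
  · intro h
    by_contra hc
    push_neg at hc
    interval_cases a <;> (rw [rr] at h; norm_num [Nat.factorial] at h)
  · intro h
    have h3 : rr 3 < -2 := by rw [rr]; norm_num [Nat.factorial]
    rcases eq_or_lt_of_le h with he | hlt
    · rwa [← he]
    · exact lt_trans (rr_anti hlt) h3

/-- Minority rule with odd m: R'(1/2) = −m!/(2^{m−1}((m−1)/2)!²), strictly decreasing
in odd m, and less than −2 iff m ≥ 7. -/
theorem stmt_5 :
    let R : ℕ → ℝ → ℝ := fun m z =>
      ∑ j ∈ Finset.range ((m - 1) / 2 + 1), (m.choose j : ℝ) * z ^ j * (1 - z) ^ (m - j)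
    let r : ℕ → ℝ := fun m =>
      -(m.factorial : ℝ) / (2 ^ (m - 1) * (((m - 1) / 2).factorial : ℝ) ^ 2)
    ∀ m : ℕ, Odd m →
      (deriv (R m) (1/2) = r m ∧
       (∀ m', Odd m' → m < m' → r m' < r m) ∧
       (r m < -2 ↔ 7 ≤ m)) := by
  intro R r m hm
  have hr : ∀ b : ℕ, r (2*b+1) = rr b := by
    intro b
    have e1 : 2*b+1-1 = 2*b := by omega
    have e2 : (2*b)/2 = b := by omega
    simp only [r, rr, e1, e2]
  obtain ⟨a, ha⟩ := hm
  have hma : m = 2*a+1 := by omega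
  subst hma
  refine ⟨?_, ?_, ?_⟩
  · have e1 : 2*a+1-1 = 2*a := by omega
    have e2 : (2*a)/2 = a := by omega
    have hRa : R (2*a+1) = fun z : ℝ => ∑ j ∈ Finset.range (a+1),
        ((2*a+1).choose j : ℝ) * z ^ j * (1 - z) ^ (2*a+1 - j) := by
      simp only [R, e1, e2]
    rw [hRa, deriv_eval a, r_formula a, hr a]
  · intro m' hm' hlt
    obtain ⟨b, hb⟩ := hm'
    have hmb : m' = 2*b+1 := by omega
    subst hmb
    rw [hr a, hr b]
    exact rr_anti (by omega)
  · rw [hr a, rr_lt_neg_two]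
    omega
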